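/- Fix q with 0 < q ≤ 1, set p = √(1 − q²), and let H = ℓ²(ℕ, ℂ). Let R be a rank-one bounded operator on H with operator norm ‖R‖ < min{2q, 2p}. Define 𝔖(R) = { A ∈ SU(C_q) : R = A + B for some B ∈ SU(C_q) } and 𝔐(R) = span_ℝ 𝔖(R), the real linear span of 𝔖(R). Then 𝔐(R) is an infinite-dimensional real vector space. -/

import Mathlib

open scoped ComplexConjugate

noncomputable section

/-- `H = ℓ²(ℕ, ℂ)`. -/
abbrev H : Type := lp (fun _ : ℕ => ℂ) 2

/-- Entrywise complex conjugation on `ℓ²(ℕ, ℂ)`: `(J x) n = conj (x n)`. -/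
def J : H → H := fun x => star x

theorem J_apply (x : H) (n : ℕ) : (J x) n = conj (x n) := rfl

/-- The complex-linear bounded operator `J ∘ A ∘ J`. -/
def conjOp (A : H →L[ℂ] H) : H →L[ℂ] H :=
  LinearMap.mkContinuous
    { toFun := fun x => J (A (J x))
      map_add' := by intro x y; simp [J, star_add]
      map_smul' := by intro c x; simp [J, star_smul] }
    ‖A‖
    (by
      intro x
      simp only [LinearMap.coe_mk, AddHom.coe_mk, J, norm_star]
      calc ‖A (star x)‖ ≤ ‖A‖ * ‖star x‖ := A.le_opNorm _
        _ = ‖A‖ * ‖x‖ := by rw [norm_star])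

theorem conjOp_apply (A : H →L[ℂ] H) (x : H) : conjOp A x = J (A (J x)) := rfl

/-- The `q`-numerical radius.  The paper's inner product `⟨·,·⟩` is linear in the
first argument, while Mathlib's `inner x y` is linear in `y`; hence the paper's
`⟨x, y⟩` is `inner y x` below. -/
def rq (q : ℝ) (A : H →L[ℂ] H) : ℝ :=
  sSup { r : ℝ | ∃ x y : H, ‖x‖ = 1 ∧ ‖y‖ = 1 ∧ (inner ℂ y x : ℂ) = (q : ℂ) ∧
    r = ‖(inner ℂ y (A x) : ℂ)‖ }

/-- The standard orthonormal basis of `ℓ²(ℕ, ℂ)`. -/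
def e (n : ℕ) : H := lp.single 2 n (1 : ℂ)

/-- The rank-one operator `x ⊗ y* : v ↦ ⟨v, y⟩ • x` (paper convention, so in
Mathlib notation `v ↦ (inner y v) • x`). -/
def rankOneOp (x y : H) : H →L[ℂ] H := (innerSL ℂ y).smulRight x

theorem rankOneOp_apply (x y v : H) : rankOneOp x y v = (inner ℂ y v : ℂ) • x := rfl

/-- The operator `C_q : x ↦ (q·⟨x, e₀⟩ + √(1 − q²)·⟨x, e₁⟩) • e₀`. -/
def Cq (q : ℝ) : H →L[ℂ] H :=
  rankOneOp (e 0) ((q : ℂ) • e 0 + (Real.sqrt (1 - q ^ 2) : ℂ) • e 1)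

/-- The saturated unitary orbit `SU(C_q) = {λ · U* C_q U : |λ| = 1, U unitary}`. -/
def SUorbit (q : ℝ) : Set (H →L[ℂ] H) :=
  { T | ∃ (lam : ℂ) (U : H →L[ℂ] H), ‖lam‖ = 1 ∧ U ∈ unitary (H →L[ℂ] H) ∧
      T = lam • (star U ∘L Cq q ∘L U) }

/-- The Hilbert–Schmidt norm `‖T‖₂ = (∑ₙ ‖T eₙ‖²)^{1/2}`. -/
def hsNorm (T : H →L[ℂ] H) : ℝ := Real.sqrt (∑' n : ℕ, ‖T (e n)‖ ^ 2)

local notation "⟪" x ", " y "⟫" => @inner ℂ H _ x y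

lemma adjoint_rankOneOp (x y : H) :
    ContinuousLinearMap.adjoint (rankOneOp x y) = rankOneOp y x := by
  symm
  rw [ContinuousLinearMap.eq_adjoint_iff]
  intro a b
  simp only [rankOneOp_apply, inner_smul_left, inner_smul_right, ← inner_conj_symm a x]
  ring

lemma star_rankOneOp (x y : H) : star (rankOneOp x y) = rankOneOp y x := by
  rw [ContinuousLinearMap.star_eq_adjoint, adjoint_rankOneOp]

lemma rankOneOp_comp (x y x' y' : H) :
    rankOneOp x y ∘L rankOneOp x' y' = ⟪y, x'⟫ • rankOneOp x y' := by
  ext v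
  simp only [ContinuousLinearMap.comp_apply, rankOneOp_apply, inner_smul_right,
    ContinuousLinearMap.smul_apply, smul_smul]
  ring_nf

lemma rankOneOp_smul_left (c : ℂ) (x y : H) :
    rankOneOp (c • x) y = c • rankOneOp x y := by
  ext v
  simp only [rankOneOp_apply, ContinuousLinearMap.smul_apply]
  rw [smul_comm]

lemma unit_prod (P : H →L[ℂ] H) (k c d : ℂ) (hP : P * P = k • P) (h : c + d + c * d * k = 0) :
    (1 + c • P) * (1 + d • P) = 1 := by
  rw [mul_add, add_mul, add_mul, mul_one, one_mul, smul_mul_smul_comm, hP, smul_smul,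
    add_assoc, ← add_smul, mul_one, ← add_smul,
    show c + (d + c * d * k) = 0 by linear_combination h, zero_smul, add_zero]

/-- The diagonal "phase" unitary. -/
def ph (b : H) (μ : ℂ) : H →L[ℂ] H := 1 + (μ - 1) • rankOneOp b b

lemma ph_apply (b : H) (μ : ℂ) (v : H) : ph b μ v = v + ((μ - 1) * ⟪b, v⟫) • b := by
  rw [ph]
  simp only [ContinuousLinearMap.add_apply, ContinuousLinearMap.one_apply,
    ContinuousLinearMap.smul_apply, rankOneOp_apply, smul_smul]

lemma ph_fix (b : H) (μ : ℂ) (v : H) (h : ⟪b, v⟫ = 0) : ph b μ v = v := by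
  rw [ph_apply, h, mul_zero, zero_smul, add_zero]

lemma ph_smul (b : H) (hb : ‖b‖ = 1) (μ ν : ℂ) : ph b μ (ν • b) = (ν * μ) • b := by
  have hbb : ⟪b, b⟫ = 1 := by rw [inner_self_eq_norm_sq_to_K, hb]; norm_num
  rw [ph_apply, inner_smul_right, hbb, mul_one, ← add_smul]
  ring_nf

lemma ph_unitary (b : H) (hb : ‖b‖ = 1) (μ : ℂ) (hμ : ‖μ‖ = 1) :
    ph b μ ∈ unitary (H →L[ℂ] H) := by
  have hbb : ⟪b, b⟫ = 1 := by rw [inner_self_eq_norm_sq_to_K, hb]; norm_num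
  have hP : rankOneOp b b * rankOneOp b b = (1 : ℂ) • rankOneOp b b := by
    rw [ContinuousLinearMap.mul_def, rankOneOp_comp, hbb]
  have hμμ : conj μ * μ = 1 := by
    rw [mul_comm, Complex.mul_conj]
    norm_cast
    rw [← Complex.sq_norm, hμ]; norm_num
  have hstar : star (ph b μ) = 1 + (conj μ - 1) • rankOneOp b b := by
    rw [ph, star_add, star_one, star_smul, star_rankOneOp]
    congr 1
    rw [Complex.star_def, map_sub, map_one]
  rw [Unitary.mem_iff, hstar, ph]
  constructor
  · exact unit_prod _ _ _ _ hP (by rw [mul_one]; linear_combination hμμ)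
  · exact unit_prod _ _ _ _ hP (by rw [mul_one]; linear_combination hμμ)

/-- Householder reflection. -/
def hh (w : H) : H →L[ℂ] H := 1 + ((-2 / ‖w‖ ^ 2 : ℝ) : ℂ) • rankOneOp w w

lemma hh_apply (w v : H) : hh w v = v + (((-2 / ‖w‖ ^ 2 : ℝ) : ℂ) * ⟪w, v⟫) • w := by
  rw [hh]
  simp only [ContinuousLinearMap.add_apply, ContinuousLinearMap.one_apply,
    ContinuousLinearMap.smul_apply, rankOneOp_apply, smul_smul]

lemma hh_fix (w v : H) (h : ⟪w, v⟫ = 0) : hh w v = v := by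
  rw [hh_apply, h, mul_zero, zero_smul, add_zero]

lemma hh_unitary (w : H) (hw : w ≠ 0) : hh w ∈ unitary (H →L[ℂ] H) := by
  have hn : (‖w‖ : ℝ) ≠ 0 := norm_ne_zero_iff.mpr hw
  have hbb : ⟪w, w⟫ = ((‖w‖ ^ 2 : ℝ) : ℂ) := by
    rw [inner_self_eq_norm_sq_to_K]; norm_cast
  have hP : rankOneOp w w * rankOneOp w w = ((‖w‖ ^ 2 : ℝ) : ℂ) • rankOneOp w w := by
    rw [ContinuousLinearMap.mul_def, rankOneOp_comp, hbb]
  have hstar : star (hh w) = hh w := by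
    rw [hh, star_add, star_one, star_smul, star_rankOneOp]
    congr 1
    rw [Complex.star_def, Complex.conj_ofReal]
  rw [Unitary.mem_iff, hstar]
  have key : (hh w) * (hh w) = 1 := by
    rw [hh]
    refine unit_prod _ _ _ _ hP ?_
    have h2 : (‖w‖ ^ 2 : ℝ) ≠ 0 := pow_ne_zero 2 hn
    have hre : (-2 / ‖w‖ ^ 2 : ℝ) + (-2 / ‖w‖ ^ 2) + (-2 / ‖w‖ ^ 2) * (-2 / ‖w‖ ^ 2) * ‖w‖ ^ 2
        = 0 := by field_simp; ring
    have hc := congrArg (fun t : ℝ => (t : ℂ)) hre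
    push_cast at hc ⊢
    linear_combination hc
  exact ⟨key, key⟩

lemma unitary_inner (U : H →L[ℂ] H) (hU : U ∈ unitary (H →L[ℂ] H)) (x y : H) :
    ⟪U x, U y⟫ = ⟪x, y⟫ := by
  have h1 : star U * U = 1 := (Unitary.mem_iff.mp hU).1
  calc ⟪U x, U y⟫ = ⟪x, ContinuousLinearMap.adjoint U (U y)⟫ := by
        rw [ContinuousLinearMap.adjoint_inner_right]
    _ = ⟪x, (star U * U) y⟫ := by rw [ContinuousLinearMap.star_eq_adjoint]; rfl
    _ = ⟪x, y⟫ := by rw [h1]; rfl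

lemma exists_unitary_map (a b : H) (ha : ‖a‖ = 1) (hb : ‖b‖ = 1) :
    ∃ V ∈ unitary (H →L[ℂ] H), V a = b ∧ ∀ x, ⟪a, x⟫ = 0 → ⟪b, x⟫ = 0 → V x = x := by
  set γ : ℂ := ⟪a, b⟫ with hγ
  set ν : ℂ := if γ = 0 then 1 else conj γ / (‖γ‖ : ℂ) with hν
  have hν1 : ‖ν‖ = 1 := by
    rw [hν]
    split_ifs with h
    · simp
    · rw [norm_div, RCLike.norm_conj, Complex.norm_real, norm_norm,
        div_self (norm_ne_zero_iff.mpr h)]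
  have hν0 : ν ≠ 0 := by intro h; rw [h] at hν1; simp at hν1
  have hr : ν * γ = ((‖γ‖ : ℝ) : ℂ) := by
    rw [hν]
    split_ifs with h
    · simp [h]
    · rw [div_mul_eq_mul_div, ← Complex.normSq_eq_conj_mul_self]
      rw [Complex.normSq_eq_norm_sq]
      have h0 : (‖γ‖ : ℂ) ≠ 0 := by
        simpa using norm_ne_zero_iff.mpr h
      field_simp
      push_cast; ring
  have haa : ⟪a, a⟫ = 1 := by rw [inner_self_eq_norm_sq_to_K, ha]; norm_num
  have hbbi : ⟪b, b⟫ = 1 := by rw [inner_self_eq_norm_sq_to_K, hb]; norm_num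
  have hνν : conj ν * ν = 1 := by
    rw [mul_comm, Complex.mul_conj]
    norm_cast
    rw [← Complex.sq_norm, hν1]; norm_num
  by_cases hcase : a = ν • b
  · refine ⟨ph b (conj ν), ph_unitary b hb _ (by rw [RCLike.norm_conj, hν1]), ?_, ?_⟩
    · rw [hcase, ph_smul b hb, mul_comm, hνν, one_smul]
    · intro x hax hbx
      exact ph_fix _ _ _ hbx
  · set w : H := a - ν • b with hw
    have hwne : w ≠ 0 := fun h => hcase (by rwa [hw, sub_eq_zero] at h)
    have hwa : ⟪w, a⟫ = 1 - ((‖γ‖ : ℝ) : ℂ) := by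
      rw [hw, inner_sub_left, haa, inner_smul_left, ← inner_conj_symm b a, ← hγ]
      rw [show conj ν * conj γ = conj (ν * γ) by rw [map_mul], hr]
      simp [Complex.conj_ofReal]
    have hwb : ⟪w, b⟫ = γ - conj ν := by
      rw [hw, inner_sub_left, inner_smul_left, hbbi, mul_one, hγ]
    have hww0 : ⟪w, w⟫ = 2 - 2 * ((‖γ‖ : ℝ) : ℂ) := by
      nth_rewrite 2 [hw]
      rw [inner_sub_right, inner_smul_right, hwa, hwb]
      linear_combination -hr + hνν
    have hww : ((‖w‖ ^ 2 : ℝ) : ℂ) = 2 - 2 * ((‖γ‖ : ℝ) : ℂ) := by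
      rw [← hww0, inner_self_eq_norm_sq_to_K]; norm_cast
    have hrr : (‖w‖ ^ 2 : ℝ) = 2 - 2 * ‖γ‖ := by exact_mod_cast hww
    have hpos : (0 : ℝ) < ‖w‖ ^ 2 := by
      have := norm_pos_iff.mpr hwne
      positivity
    have keyR : (-2 / ‖w‖ ^ 2 : ℝ) * (1 - ‖γ‖) = -1 := by
      have h2ne : (‖w‖ ^ 2 : ℝ) ≠ 0 := ne_of_gt hpos
      rw [hrr] at h2ne ⊢
      rw [div_mul_eq_mul_div, div_eq_iff h2ne]
      ring
    have key : (((-2 / ‖w‖ ^ 2 : ℝ) : ℂ) * ⟪w, a⟫) = -1 := by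
      rw [hwa]
      have := congrArg (fun t : ℝ => (t : ℂ)) keyR
      push_cast at this ⊢
      linear_combination this
    refine ⟨ph b (conj ν) * hh w,
      mul_mem (ph_unitary b hb _ (by rw [RCLike.norm_conj, hν1])) (hh_unitary w hwne), ?_, ?_⟩
    · rw [ContinuousLinearMap.mul_apply, hh_apply, key, neg_one_smul, hw]
      rw [show a + -(a - ν • b) = ν • b by abel, ph_smul b hb, mul_comm, hνν, one_smul]
    · intro x hax hbx
      rw [ContinuousLinearMap.mul_apply, hh_fix, ph_fix _ _ _ hbx]
      rw [hw, inner_sub_left, hax, inner_smul_left, hbx, mul_zero, sub_zero]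

lemma inner_e (m n : ℕ) : ⟪e m, e n⟫ = if m = n then 1 else 0 := by
  rw [e, e, lp.inner_single_left, lp.single_apply]
  split_ifs with h <;> simp [Pi.single_apply, h]

lemma norm_eq_one_of_inner_self (x : H) (hx : ⟪x, x⟫ = 1) : ‖x‖ = 1 := by
  have h2 : ‖x‖ ^ 2 = 1 := by
    rw [← inner_self_eq_norm_sq (𝕜 := ℂ), hx]; rfl
  rw [← Real.sqrt_sq (norm_nonneg x), h2, Real.sqrt_one]

lemma norm_e (n : ℕ) : ‖e n‖ = 1 :=
  norm_eq_one_of_inner_self _ (by rw [inner_e]; simp)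

lemma unitary_norm (V : H →L[ℂ] H) (hV : V ∈ unitary (H →L[ℂ] H)) (x : H) :
    ‖V x‖ = ‖x‖ := by
  have h2 : ‖V x‖ ^ 2 = ‖x‖ ^ 2 := by
    rw [← inner_self_eq_norm_sq (𝕜 := ℂ), ← inner_self_eq_norm_sq (𝕜 := ℂ),
      unitary_inner V hV]
  rw [← Real.sqrt_sq (norm_nonneg (V x)), h2, Real.sqrt_sq (norm_nonneg x)]

lemma unitary_comp_rankOneOp (V : H →L[ℂ] H) (hV : V ∈ unitary (H →L[ℂ] H)) (x y : H) :
    V ∘L rankOneOp x y ∘L star V = rankOneOp (V x) (V y) := by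
  refine ContinuousLinearMap.ext fun z => ?_
  have h2 : V (star V z) = z := by
    have hm : V * star V = 1 := (Unitary.mem_iff.mp hV).2
    calc V (star V z) = (V * star V) z := rfl
      _ = z := by rw [hm]; rfl
  calc (V ∘L rankOneOp x y ∘L star V) z = ⟪y, star V z⟫ • V x := by
        simp only [ContinuousLinearMap.comp_apply, rankOneOp_apply, map_smul]
    _ = ⟪V y, z⟫ • V x := by rw [← unitary_inner V hV y (star V z), h2]
    _ = rankOneOp (V x) (V y) z := rfl

lemma exists_unitary_pair (f h : H) (hf : ‖f‖ = 1) (hh1 : ‖h‖ = 1) (hfh : ⟪f, h⟫ = 0) :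
    ∃ V ∈ unitary (H →L[ℂ] H), V (e 0) = f ∧ V (e 1) = h := by
  obtain ⟨V₁, hV₁u, hV₁a, -⟩ := exists_unitary_map (e 0) f (norm_e 0) hf
  set a' := V₁ (e 1) with ha'
  have ha'n : ‖a'‖ = 1 := by rw [ha', unitary_norm V₁ hV₁u, norm_e]
  have hfa' : ⟪f, a'⟫ = 0 := by
    rw [← hV₁a, ha', unitary_inner V₁ hV₁u, inner_e]; simp
  obtain ⟨V₂, hV₂u, hV₂a, hV₂fix⟩ := exists_unitary_map a' h ha'n hh1
  refine ⟨V₂ * V₁, mul_mem hV₂u hV₁u, ?_, ?_⟩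
  · rw [ContinuousLinearMap.mul_apply, hV₁a]
    refine hV₂fix f ?_ ?_
    · rw [← inner_conj_symm, hfa', map_zero]
    · rw [← inner_conj_symm, hfh, map_zero]
  · rw [ContinuousLinearMap.mul_apply, ← ha', hV₂a]

lemma mem_SUorbit_of (q : ℝ) (hq0 : 0 < q) (hq1 : q < 1) (u g : H)
    (hu : ‖u‖ = 1) (hg : ‖g‖ = 1) (hug : ‖⟪u, g⟫‖ = q) :
    rankOneOp u g ∈ SUorbit q := by
  set p : ℝ := Real.sqrt (1 - q ^ 2) with hp
  have hq2 : (0 : ℝ) < 1 - q ^ 2 := by nlinarith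
  have hp0 : 0 < p := Real.sqrt_pos.mpr hq2
  have hp2 : p ^ 2 = 1 - q ^ 2 := Real.sq_sqrt (le_of_lt hq2)
  have hqne : ((q : ℝ) : ℂ) ≠ 0 := by
    simpa using ne_of_gt hq0
  set μ : ℂ := ⟪u, g⟫ / (q : ℂ) with hμ
  have hμ1 : ‖μ‖ = 1 := by
    rw [hμ, norm_div, hug, Complex.norm_real, Real.norm_eq_abs, abs_of_pos hq0,
      div_self (ne_of_gt hq0)]
  have hqμ : ((q : ℝ) : ℂ) * μ = ⟪u, g⟫ := by
    rw [hμ, mul_div_cancel₀ _ hqne]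
  have hμμ : conj μ * μ = 1 := by
    rw [mul_comm, Complex.mul_conj]
    norm_cast
    rw [← Complex.sq_norm, hμ1]; norm_num
  have huu : ⟪u, u⟫ = 1 := by rw [inner_self_eq_norm_sq_to_K, hu]; norm_num
  have hgg : ⟪g, g⟫ = 1 := by rw [inner_self_eq_norm_sq_to_K, hg]; norm_num
  set g' : H := g - (((q : ℝ) : ℂ) * μ) • u with hg'
  have hug' : ⟪u, g'⟫ = 0 := by
    rw [hg', inner_sub_right, inner_smul_right, huu, mul_one, hqμ, sub_self]
  have hg'g' : ⟪g', g'⟫ = ((p ^ 2 : ℝ) : ℂ) := by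
    have hgu : ⟪g, u⟫ = conj (⟪u, g⟫) := by rw [inner_conj_symm]
    have hι : conj (⟪u, g⟫) * ⟪u, g⟫ = ((q : ℝ) : ℂ) ^ 2 := by
      rw [mul_comm, Complex.mul_conj]
      norm_cast
      rw [← Complex.sq_norm, hug]
    simp only [hg', inner_sub_left, inner_sub_right, inner_smul_left, inner_smul_right,
      huu, hgg, hgu, mul_one, hqμ]
    rw [show ((p ^ 2 : ℝ) : ℂ) = 1 - ((q : ℝ) : ℂ) ^ 2 by rw [hp2]; push_cast; ring]
    linear_combination -hι
  set h : H := ((p⁻¹ : ℝ) : ℂ) • g' with hh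
  have hph : ((p : ℝ) : ℂ) ≠ 0 := by
    simpa using ne_of_gt hp0
  have hhh : ⟪h, h⟫ = 1 := by
    rw [hh, inner_smul_right, inner_smul_left, hg'g', Complex.conj_ofReal]
    push_cast
    field_simp
  have hhn : ‖h‖ = 1 := norm_eq_one_of_inner_self _ hhh
  set f : H := μ • u with hf
  have hfn : ‖f‖ = 1 := by rw [hf, norm_smul, hμ1, hu, one_mul]
  have hfh : ⟪f, h⟫ = 0 := by
    rw [hf, hh, inner_smul_left, inner_smul_right, hug', mul_zero, mul_zero]
  obtain ⟨V, hVu, hV0, hV1⟩ := exists_unitary_pair f h hfn hhn hfh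
  refine ⟨conj μ, star V, by rw [RCLike.norm_conj, hμ1], Unitary.star_mem hVu, ?_⟩
  rw [star_star]
  rw [show Cq q = rankOneOp (e 0) ((q : ℂ) • e 0 + ((p : ℝ) : ℂ) • e 1) from rfl]
  rw [unitary_comp_rankOneOp V hVu]
  have hVg : V ((q : ℂ) • e 0 + ((p : ℝ) : ℂ) • e 1) = g := by
    rw [map_add, map_smul, map_smul, hV0, hV1, hf, hh, smul_smul, smul_smul]
    rw [show ((p : ℝ) : ℂ) * ((p⁻¹ : ℝ) : ℂ) = 1 by push_cast; field_simp]
    rw [one_smul, hg']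
    abel
  rw [hVg, hV0, hf, rankOneOp_smul_left, smul_smul, hμμ, one_smul]

lemma orthonormal_e : Orthonormal ℂ e := by
  rw [orthonormal_iff_ite]
  intro i j; rw [inner_e]

lemma H_infinite : ¬ FiniteDimensional ℂ H := fun hfin =>
  Module.Finite.not_linearIndependent_of_infinite e orthonormal_e.linearIndependent

lemma exists_orthonormal_perp (u w : H) :
    ∃ o : ℕ → H, Orthonormal ℂ o ∧ ∀ k, ⟪u, o k⟫ = 0 ∧ ⟪w, o k⟫ = 0 := by
  set K : Submodule ℂ H := Submodule.span ℂ {u, w} with hK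
  haveI : FiniteDimensional ℂ K := FiniteDimensional.span_of_finite ℂ (by
    exact (Set.finite_singleton w).insert u)
  have hsup : K ⊔ Kᗮ = ⊤ := Submodule.sup_orthogonal_of_hasOrthogonalProjection
  have hKperp_inf : ¬ FiniteDimensional ℂ ↥Kᗮ := by
    intro hfin
    have h1 : FiniteDimensional ℂ ↥(K ⊔ Kᗮ) := Submodule.finiteDimensional_sup K Kᗮ
    rw [hsup] at h1
    exact H_infinite (Module.Finite.equiv Submodule.topEquiv)
  obtain ⟨s, b, hb⟩ := exists_hilbertBasis ℂ ↥Kᗮ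
  have hsinf : s.Infinite := by
    intro hsfin
    apply hKperp_inf
    have hcl : (Submodule.span ℂ (Set.range ⇑b)).topologicalClosure = ⊤ := b.dense_span
    have hfin : (Set.range ⇑b).Finite := by
      rw [hb, Subtype.range_coe]; exact hsfin
    haveI : FiniteDimensional ℂ (Submodule.span ℂ (Set.range ⇑b)) :=
      FiniteDimensional.span_of_finite ℂ hfin
    have hclosed : (Submodule.span ℂ (Set.range ⇑b)).topologicalClosure
        = Submodule.span ℂ (Set.range ⇑b) :=
      IsClosed.submodule_topologicalClosure_eq (Submodule.closed_of_finiteDimensional _)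
    rw [hclosed] at hcl
    have : FiniteDimensional ℂ (⊤ : Submodule ℂ ↥Kᗮ) := hcl ▸ inferInstance
    exact Module.Finite.equiv Submodule.topEquiv
  haveI := hsinf.to_subtype
  set emb := Infinite.natEmbedding s with hemb
  refine ⟨fun k => ((b (emb k) : ↥Kᗮ) : H), ?_, ?_⟩
  · have hON : Orthonormal ℂ (fun k => b (emb k)) := b.orthonormal.comp emb emb.injective
    rw [orthonormal_iff_ite] at hON ⊢
    intro i j
    have := hON i j
    rwa [Submodule.coe_inner] at this
  · intro k
    have hmem : ((b (emb k) : ↥Kᗮ) : H) ∈ Kᗮ := (b (emb k)).2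
    have hu : u ∈ K := Submodule.subset_span (Set.mem_insert u {w})
    have hw : w ∈ K := Submodule.subset_span (Set.mem_insert_of_mem u rfl)
    exact ⟨Submodule.inner_right_of_mem_orthogonal hu hmem,
      Submodule.inner_right_of_mem_orthogonal hw hmem⟩

set_option synthInstance.maxHeartbeats 1000000 in
lemma rank_one_decomp (R : H →L[ℂ] H) (hrank : LinearMap.rank (R : H →ₗ[ℂ] H) = 1) :
    ∃ u v : H, ‖u‖ = 1 ∧ R = rankOneOp u v ∧ ‖v‖ ≤ ‖R‖ := by
  rw [LinearMap.rank, rank_eq_one_iff] at hrank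
  obtain ⟨v₀, hv₀ne, hv₀⟩ := hrank
  set u0 : H := (v₀ : H) with hu0
  have hu0ne : u0 ≠ 0 := fun h => hv₀ne (Subtype.ext h)
  have hu0norm : ‖u0‖ ≠ 0 := norm_ne_zero_iff.mpr hu0ne
  set u : H := ((‖u0‖⁻¹ : ℝ) : ℂ) • u0 with hu
  have hunorm : ‖u‖ = 1 := by
    rw [hu, norm_smul, Complex.norm_real, Real.norm_eq_abs, abs_of_pos
      (inv_pos.mpr (norm_pos_iff.mpr hu0ne)), inv_mul_cancel₀ hu0norm]
  have hu0u0 : ⟪u0, u0⟫ = ((‖u0‖ ^ 2 : ℝ) : ℂ) := by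
    rw [inner_self_eq_norm_sq_to_K]; norm_cast
  have key : ∀ x : H, R x = ⟪u, R x⟫ • u := by
    intro x
    obtain ⟨c, hc⟩ := hv₀ ⟨R x, LinearMap.mem_range_self _ x⟩
    have hc' : R x = c • u0 := by
      have h := congrArg (Subtype.val) hc
      simpa [hu0] using h.symm
    have hcne : ((‖u0‖ : ℝ) : ℂ) ≠ 0 := by exact_mod_cast hu0norm
    rw [hc', hu, inner_smul_right, inner_smul_left, hu0u0, Complex.conj_ofReal, smul_smul]
    congr 1
    push_cast
    field_simp
  set v : H := (InnerProductSpace.toDual ℂ H).symm ((innerSL ℂ u).comp R) with hv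
  have hvx : ∀ x : H, ⟪v, x⟫ = ⟪u, R x⟫ := fun x =>
    InnerProductSpace.toDual_symm_apply
  have hRv : R = rankOneOp u v := by
    refine ContinuousLinearMap.ext fun x => ?_
    rw [rankOneOp_apply, hvx, ← key]
  refine ⟨u, v, hunorm, hRv, ?_⟩
  by_cases hv0 : v = 0
  · rw [hv0, norm_zero]; exact norm_nonneg R
  · have h1 : ‖v‖ ^ 2 = Complex.re ⟪u, R v⟫ := by
      rw [← hvx v]
      exact (inner_self_eq_norm_sq (𝕜 := ℂ) v).symm
    have h2 : Complex.re ⟪u, R v⟫ ≤ ‖R‖ * ‖v‖ := by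
      calc Complex.re ⟪u, R v⟫ ≤ ‖⟪u, R v⟫‖ := Complex.re_le_norm _
        _ ≤ ‖u‖ * ‖R v‖ := norm_inner_le_norm _ _
        _ = ‖R v‖ := by rw [hunorm, one_mul]
        _ ≤ ‖R‖ * ‖v‖ := R.le_opNorm v
    have hvpos : 0 < ‖v‖ := norm_pos_iff.mpr hv0
    nlinarith [h1, h2]

lemma rankOneOp_add_right (x y y' : H) :
    rankOneOp x y + rankOneOp x y' = rankOneOp x (y + y') := by
  ext v
  simp only [ContinuousLinearMap.add_apply, rankOneOp_apply, inner_add_left, add_smul]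

lemma conj_mul_self_abs (z : ℂ) : conj z * z = ((‖z‖ ^ 2 : ℝ) : ℂ) := by
  rw [mul_comm, Complex.mul_conj, Complex.normSq_eq_norm_sq]

lemma inner_self_triple (x y z : H) (b c d : ℂ) (hxy : ⟪x, y⟫ = 0) (hxz : ⟪x, z⟫ = 0)
    (hyz : ⟪y, z⟫ = 0) :
    ⟪b • x + c • y + d • z, b • x + c • y + d • z⟫
      = conj b * b * ⟪x, x⟫ + conj c * c * ⟪y, y⟫ + conj d * d * ⟪z, z⟫ := by
  have hyx : ⟪y, x⟫ = 0 := by rw [← inner_conj_symm, hxy, map_zero]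
  have hzx : ⟪z, x⟫ = 0 := by rw [← inner_conj_symm, hxz, map_zero]
  have hzy : ⟪z, y⟫ = 0 := by rw [← inner_conj_symm, hyz, map_zero]
  simp only [inner_add_left, inner_add_right, inner_smul_left, inner_smul_right,
    hxy, hxz, hyz, hyx, hzx, hzy, mul_zero, add_zero, zero_add]
  ring

set_option maxHeartbeats 2000000 in
/-- If `R` is a rank-one bounded operator on `ℓ²(ℕ, ℂ)` with
`‖R‖ < min{2q, 2p}` (`p = √(1 − q²)`), then the real span `𝔐(R)` of
`𝔖(R) = {A ∈ SU(C_q) : R = A + B for some B ∈ SU(C_q)}` is infinite-dimensional over `ℝ`. -/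
theorem statement11 (q : ℝ) (hq0 : 0 < q) (hq1 : q ≤ 1)
    (R : H →L[ℂ] H) (hrank : LinearMap.rank (R : H →ₗ[ℂ] H) = 1)
    (hnorm : ‖R‖ < min (2 * q) (2 * Real.sqrt (1 - q ^ 2))) :
    ¬ FiniteDimensional ℝ
        ↥(Submodule.span ℝ {A : H →L[ℂ] H | A ∈ SUorbit q ∧ ∃ B ∈ SUorbit q, R = A + B}) := by
  intro hfin
  haveI := hfin
  set p : ℝ := Real.sqrt (1 - q ^ 2) with hp
  have hR2p : ‖R‖ < 2 * p := lt_of_lt_of_le hnorm (min_le_right _ _)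
  have hR2q : ‖R‖ < 2 * q := lt_of_lt_of_le hnorm (min_le_left _ _)
  have hp0 : 0 < p := by nlinarith [norm_nonneg R]
  have hq1' : q < 1 := by
    by_contra hcon
    have hqq : q = 1 := le_antisymm hq1 (not_lt.mp hcon)
    rw [hp, hqq] at hp0
    norm_num at hp0
  have hp2 : p ^ 2 = 1 - q ^ 2 := Real.sq_sqrt (by nlinarith)
  obtain ⟨u, v, hu, hRuv, hvR⟩ := rank_one_decomp R hrank
  have hune : u ≠ 0 := by
    intro h; rw [h, norm_zero] at hu; norm_num at hu
  have hv2q : ‖v‖ < 2 * q := lt_of_le_of_lt hvR hR2q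
  have hv2p : ‖v‖ < 2 * p := lt_of_le_of_lt hvR hR2p
  set α : ℂ := ⟪u, v⟫ with hα
  set w : H := v - α • u with hw
  have hv_eq : v = α • u + w := by rw [hw]; abel
  have huu : ⟪u, u⟫ = 1 := by rw [inner_self_eq_norm_sq_to_K, hu]; norm_num
  have hww : ⟪w, w⟫ = ((‖w‖ ^ 2 : ℝ) : ℂ) := by
    rw [inner_self_eq_norm_sq_to_K]; norm_cast
  have huw : ⟪u, w⟫ = 0 := by
    rw [hw, inner_sub_right, inner_smul_right, huu, mul_one, ← hα, sub_self]
  have hαv : ‖α‖ ≤ ‖v‖ := by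
    rw [hα]
    calc ‖⟪u, v⟫‖ ≤ ‖u‖ * ‖v‖ := norm_inner_le_norm _ _
      _ = ‖v‖ := by rw [hu, one_mul]
  have hvv : (‖v‖ ^ 2 : ℝ) = ‖α‖ ^ 2 + ‖w‖ ^ 2 := by
    have hαα : conj α * α = ((‖α‖ ^ 2 : ℝ) : ℂ) := conj_mul_self_abs α
    have hC : ((‖v‖ ^ 2 : ℝ) : ℂ) = ((‖α‖ ^ 2 : ℝ) : ℂ) + ((‖w‖ ^ 2 : ℝ) : ℂ) := by
      rw [← hww, ← hαα]
      rw [show ((‖v‖ ^ 2 : ℝ) : ℂ) = ⟪v, v⟫ by rw [inner_self_eq_norm_sq_to_K]; norm_cast]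
      nth_rewrite 1 [hv_eq]; nth_rewrite 1 [hv_eq]
      have hwu : ⟪w, u⟫ = 0 := by rw [← inner_conj_symm, huw, map_zero]
      simp only [inner_add_left, inner_add_right, inner_smul_left, inner_smul_right,
        huu, huw, hwu, mul_zero, mul_one, add_zero, zero_add]
      ring
    exact_mod_cast hC
  have hw2p : ‖w‖ < 2 * p := by
    nlinarith [norm_nonneg w, norm_nonneg v, norm_nonneg α]
  -- the complex number β with |β| = |α - β| = q
  set a : ℝ := ‖α‖ with ha
  have ha0 : 0 ≤ a := norm_nonneg α
  have ha2q : a < 2 * q := lt_of_le_of_lt hαv hv2q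
  set t : ℝ := Real.sqrt (q ^ 2 - a ^ 2 / 4) with htdef
  have ht2 : t ^ 2 = q ^ 2 - a ^ 2 / 4 := Real.sq_sqrt (by nlinarith)
  set d : ℂ := if α = 0 then 1 else α / ((a : ℝ) : ℂ) with hd
  have hdabs : ‖d‖ = 1 := by
    rw [hd]
    split_ifs with h
    · simp
    · have hane : a ≠ 0 := by
        rw [ha]; exact norm_ne_zero_iff.mpr h
      rw [norm_div, Complex.norm_real, Real.norm_eq_abs, abs_of_nonneg ha0, ← ha, div_self hane]
  have hαad : α = ((a : ℝ) : ℂ) * d := by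
    rw [hd]
    split_ifs with h
    · rw [h, mul_one, ha, h]
      simp
    · have hane : ((a : ℝ) : ℂ) ≠ 0 := by
        have h2 : a ≠ 0 := by rw [ha]; exact norm_ne_zero_iff.mpr h
        exact_mod_cast h2
      field_simp
  set β : ℂ := (((a / 2 : ℝ) : ℂ) + ((t : ℝ) : ℂ) * Complex.I) * d with hβdef
  have habs1 : ‖(((a / 2 : ℝ)) : ℂ) + ((t : ℝ) : ℂ) * Complex.I‖ = q := by
    rw [Complex.norm_add_mul_I]
    rw [show ((a / 2) ^ 2 + t ^ 2 : ℝ) = q ^ 2 by rw [ht2]; ring]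
    exact Real.sqrt_sq (le_of_lt hq0)
  have hβq : ‖β‖ = q := by
    rw [hβdef, norm_mul, habs1, hdabs, mul_one]
  have hαβq : ‖α - β‖ = q := by
    have hsub : α - β = ((((a / 2 : ℝ)) : ℂ) - ((t : ℝ) : ℂ) * Complex.I) * d := by
      rw [hβdef, hαad]
      push_cast
      ring
    rw [hsub, norm_mul, hdabs, mul_one]
    rw [show (((a / 2 : ℝ) : ℂ) - ((t : ℝ) : ℂ) * Complex.I)
        = conj ((((a / 2 : ℝ)) : ℂ) + ((t : ℝ) : ℂ) * Complex.I) by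
      rw [map_add, map_mul, Complex.conj_ofReal, Complex.conj_ofReal, Complex.conj_I]; ring]
    rw [RCLike.norm_conj]
    exact habs1
  -- the shift parameter s
  set s : ℝ := Real.sqrt (p ^ 2 - ‖w‖ ^ 2 / 4) with hsdef
  have hs2 : s ^ 2 = p ^ 2 - ‖w‖ ^ 2 / 4 := Real.sq_sqrt (by nlinarith [norm_nonneg w])
  have hs0 : 0 < s := Real.sqrt_pos.mpr (by nlinarith [norm_nonneg w])
  obtain ⟨o, hoON, hoperp⟩ := exists_orthonormal_perp u w
  have hoo : ∀ i j : ℕ, ⟪o i, o j⟫ = if i = j then 1 else 0 := fun i j =>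
    orthonormal_iff_ite.mp hoON i j
  set g : ℕ → H := fun k => β • u + ((2⁻¹ : ℝ) : ℂ) • w + ((s : ℝ) : ℂ) • o k with hg
  -- inner products with g
  have hββ : conj β * β = ((q ^ 2 : ℝ) : ℂ) := by
    rw [conj_mul_self_abs β, hβq]
  have hαβαβ : conj (α - β) * (α - β) = ((q ^ 2 : ℝ) : ℂ) := by
    rw [conj_mul_self_abs (α - β), hαβq]
  have hgg : ∀ k, ⟪g k, g k⟫ = 1 := by
    intro k
    rw [hg]
    rw [inner_self_triple u w (o k) β _ _ huw (hoperp k).1 (hoperp k).2]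
    rw [huu, hww, hoo k k, if_pos rfl, hββ, Complex.conj_ofReal, Complex.conj_ofReal]
    have hreal : (q ^ 2 : ℝ) + 2⁻¹ * 2⁻¹ * ‖w‖ ^ 2 + s * s = 1 := by nlinarith
    have hC := congrArg (fun r : ℝ => (r : ℂ)) hreal
    push_cast at hC ⊢
    linear_combination hC
  have hgnorm : ∀ k, ‖g k‖ = 1 := fun k => norm_eq_one_of_inner_self _ (hgg k)
  have hug : ∀ k, ⟪u, g k⟫ = β := by
    intro k
    rw [hg]
    simp only [inner_add_right, inner_smul_right, huu, huw, (hoperp k).1,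
      mul_zero, mul_one, add_zero]
  -- v - g k
  have hvg : ∀ k, v - g k = (α - β) • u + ((2⁻¹ : ℝ) : ℂ) • w + ((-s : ℝ) : ℂ) • o k := by
    intro k
    rw [hg, hv_eq]
    push_cast
    module
  have hgg' : ∀ k, ⟪v - g k, v - g k⟫ = 1 := by
    intro k
    rw [hvg k]
    rw [inner_self_triple u w (o k) (α - β) _ _ huw (hoperp k).1 (hoperp k).2]
    rw [huu, hww, hoo k k, if_pos rfl, hαβαβ, Complex.conj_ofReal, Complex.conj_ofReal]
    have hreal : (q ^ 2 : ℝ) + 2⁻¹ * 2⁻¹ * ‖w‖ ^ 2 + -s * -s = 1 := by nlinarith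
    have hC := congrArg (fun r : ℝ => (r : ℂ)) hreal
    push_cast at hC ⊢
    linear_combination hC
  have hgnorm' : ∀ k, ‖v - g k‖ = 1 := fun k => norm_eq_one_of_inner_self _ (hgg' k)
  have hug' : ∀ k, ⟪u, v - g k⟫ = α - β := by
    intro k
    rw [hvg k]
    simp only [inner_add_right, inner_smul_right, huu, huw, (hoperp k).1,
      mul_zero, mul_one, add_zero]
  -- membership in the difference set
  have hS : ∀ k, rankOneOp u (g k) ∈
      {A : H →L[ℂ] H | A ∈ SUorbit q ∧ ∃ B ∈ SUorbit q, R = A + B} := by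
    intro k
    refine ⟨mem_SUorbit_of q hq0 hq1' u (g k) hu (hgnorm k)
      (by rw [hug k, hβq]), rankOneOp u (v - g k),
      mem_SUorbit_of q hq0 hq1' u (v - g k) hu (hgnorm' k)
      (by rw [hug' k, hαβq]), ?_⟩
    rw [rankOneOp_add_right, show g k + (v - g k) = v by abel, hRuv]
  -- linear independence
  have hsC : ((s : ℝ) : ℂ) ≠ 0 := by
    simpa using ne_of_gt hs0
  have hAoj : ∀ i j : ℕ, ⟪u, (rankOneOp u (g i)) (o j)⟫ = if i = j then ((s : ℝ) : ℂ) else 0 := by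
    intro i j
    rw [rankOneOp_apply, inner_smul_right, huu, mul_one, hg]
    have h1 : ⟪u, o j⟫ = 0 := (hoperp j).1
    have h2 : ⟪w, o j⟫ = 0 := (hoperp j).2
    simp only [inner_add_left, inner_smul_left, h1, h2, hoo i j,
      mul_zero, zero_add, add_zero, Complex.conj_ofReal, mul_ite, mul_one]
  have hli : LinearIndependent ℝ (fun k : ℕ => rankOneOp u (g k)) := by
    rw [linearIndependent_iff']
    intro F tc hsum j hj
    have happ := congrArg (fun T : H →L[ℂ] H => ⟪u, T (o j)⟫) hsum
    simp only [ContinuousLinearMap.zero_apply, inner_zero_right] at happ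
    rw [show ((Finset.sum F fun i => tc i • rankOneOp u (g i)) (o j))
        = Finset.sum F (fun i => tc i • ((rankOneOp u (g i)) (o j))) by
      rw [ContinuousLinearMap.sum_apply]
      exact Finset.sum_congr rfl fun i _ => rfl] at happ
    rw [inner_sum] at happ
    have hterm : ∀ i ∈ F, ⟪u, tc i • ((rankOneOp u (g i)) (o j))⟫
        = if i = j then ((tc i : ℝ) : ℂ) * ((s : ℝ) : ℂ) else 0 := by
      intro i _
      rw [RCLike.real_smul_eq_coe_smul (K := ℂ), inner_smul_right, hAoj i j,
        mul_ite, mul_zero]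
      congr
    rw [Finset.sum_congr rfl hterm, Finset.sum_ite_eq' F j
      (fun i => ((tc i : ℝ) : ℂ) * ((s : ℝ) : ℂ)), if_pos hj] at happ
    rcases mul_eq_zero.mp happ with h | h
    · exact_mod_cast h
    · exact absurd h hsC
  have hmem : ∀ k, rankOneOp u (g k) ∈ Submodule.span ℝ
      {A : H →L[ℂ] H | A ∈ SUorbit q ∧ ∃ B ∈ SUorbit q, R = A + B} :=
    fun k => Submodule.subset_span (hS k)
  have hliM : LinearIndependent ℝ (fun k : ℕ => (⟨rankOneOp u (g k), hmem k⟩ :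
      ↥(Submodule.span ℝ {A : H →L[ℂ] H | A ∈ SUorbit q ∧ ∃ B ∈ SUorbit q, R = A + B}))) := by
    apply LinearIndependent.of_comp
      (Submodule.span ℝ {A : H →L[ℂ] H | A ∈ SUorbit q ∧ ∃ B ∈ SUorbit q, R = A + B}).subtype
    exact hli
  exact Module.Finite.not_linearIndependent_of_infinite _ hliM

end
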